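/- Let (X, D) be a metric space, μ : X → ℝ a 1-Lipschitz function, and x* ∈ X with μ(x*) ≥ μ(x) for all x ∈ X; write μ* = μ(x*). Let S ⊆ X be a finite nonempty set (the active arms), and let μ̂ : S → ℝ and ε : S → ℝ with ε(x) ≥ 0 satisfy |μ̂(x) − μ(x)| ≤ ε(x) for all x ∈ S. Suppose x* is covered, i.e., there exists x** ∈ S with D(x*, x**) ≤ ε(x**). If x_s ∈ S maximizes the index μ̂(x) + 2ε(x) over x ∈ S, then the optimality gap of x_s satisfies μ* − μ(x_s) ≤ 3ε(x_s). -/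
import Mathlib

/-- Q-Zooming selection rule, under the clean event: if the
optimal arm is covered by the confidence ball of some active arm and `x_s`
maximizes the index `μ̂(x) + 2ε(x)` over the active set `S`, then the
optimality gap of `x_s` is at most `3ε(x_s)`. -/
theorem qzooming_selected_gap {X : Type*} [MetricSpace X]
    (μ : X → ℝ) (hμ : LipschitzWith 1 μ)
    (xstar : X) (hmax : ∀ x, μ x ≤ μ xstar)
    (S : Finset X) (hS : S.Nonempty)
    (μhat : X → ℝ) (ε : X → ℝ) (hε : ∀ x ∈ S, 0 ≤ ε x)
    (hest : ∀ x ∈ S, |μhat x - μ x| ≤ ε x)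
    (hcov : ∃ xss ∈ S, dist xstar xss ≤ ε xss)
    (xs : X) (hxs : xs ∈ S)
    (hsel : ∀ x ∈ S, μhat x + 2 * ε x ≤ μhat xs + 2 * ε xs) :
    μ xstar - μ xs ≤ 3 * ε xs := by
  obtain ⟨xss, hmem, hd⟩ := hcov
  have hlip : |μ xstar - μ xss| ≤ dist xstar xss := by
    have := hμ.dist_le_mul xstar xss
    simpa [Real.dist_eq] using this
  have h1 : μ xstar ≤ μ xss + ε xss := by
    have := abs_le.mp hlip
    linarith [this.2]
  have h2 := abs_le.mp (hest xss hmem)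
  have h3 := hsel xss hmem
  have h4 := abs_le.mp (hest xs hxs)
  linarith [h2.1, h2.2, h4.1, h4.2]
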